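/- Let l > 0, let h be a continuous function on (0, l], and fix δ ∈ (0, l). Define w_δ(t) = ( ∫₀ᵗ exp( 2·∫_{τ+δ}^{t+δ} h(s) ds ) dτ )⁻¹ for t ∈ (0, l − δ]. Then w_δ(t) > 0 for all t ∈ (0, l − δ], w_δ is continuously differentiable on (0, l − δ] and satisfies w_δ'(t) + w_δ(t)² + 2·h(t + δ)·w_δ(t) = 0 there, and lim_{t→0⁺} t·w_δ(t) = 1. -/

import Mathlib

open MeasureTheory Set Filter intervalIntegral

/-- Let `l > 0`, let `h` be continuous on `(0, l]`, fix `δ ∈ (0, l)`,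
and define `w t = (∫₀ᵗ exp(2·∫_{τ+δ}^{t+δ} h s ds) dτ)⁻¹` for `t ∈ (0, l − δ]`. Then
`w > 0` on `(0, l − δ]`, `w` is continuously differentiable on `(0, l − δ]` where it
satisfies `w' + w² + 2·h(·+δ)·w = 0`, and `lim_{t→0⁺} t·w t = 1`. -/
theorem stmt8 (l δ : ℝ) (h w : ℝ → ℝ)
    (hl : 0 < l)
    (hh_cont : ContinuousOn h (Set.Ioc 0 l))
    (hδ : δ ∈ Set.Ioo 0 l)
    (hw : ∀ t : ℝ, w t = (∫ τ in (0:ℝ)..t, Real.exp (2 * ∫ s in (τ + δ)..(t + δ), h s))⁻¹) :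
    (∀ t ∈ Set.Ioc 0 (l - δ), 0 < w t) ∧
      (∃ w' : ℝ → ℝ, ContinuousOn w' (Set.Ioc 0 (l - δ)) ∧
        ∀ t ∈ Set.Ioc 0 (l - δ),
          HasDerivWithinAt w (w' t) (Set.Ioc 0 (l - δ)) t ∧
            w' t + (w t)^2 + 2 * h (t + δ) * w t = 0) ∧
      Filter.Tendsto (fun t => t * w t) (nhdsWithin 0 (Set.Ioi 0)) (nhds 1) := by
  obtain ⟨hδ0, hδl⟩ := hδ
  set L := l - δ with hLdef
  have hL0 : 0 < L := sub_pos.mpr hδl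
  -- a continuous extension of `h` from `Icc δ l` to all of `ℝ`
  set g : ℝ → ℝ := fun s => h (max δ (min l s)) with hgdef
  have hmemg : ∀ s : ℝ, max δ (min l s) ∈ Set.Ioc 0 l := by
    intro s
    constructor
    · exact lt_of_lt_of_le hδ0 (le_max_left _ _)
    · exact max_le hδl.le (min_le_left _ _)
  have hg_cont : Continuous g := by
    apply hh_cont.comp_continuous
    · exact continuous_const.max (continuous_const.min continuous_id)
    · exact hmemg
  have hg_eq : ∀ s ∈ Set.Icc δ l, g s = h s := by
    intro s hs
    simp only [hgdef]
    rw [min_eq_right hs.2, max_eq_right hs.1]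
  -- building blocks
  set H : ℝ → ℝ := fun t => ∫ s in δ..(t + δ), g s with hHdef
  have hH : ∀ t : ℝ, HasDerivAt H (g (t + δ)) t := by
    intro t
    have h1 : HasDerivAt (fun y => ∫ s in δ..y, g s) (g (t + δ)) (t + δ) :=
      intervalIntegral.integral_hasDerivAt_right (hg_cont.intervalIntegrable _ _)
        (hg_cont.aestronglyMeasurable.stronglyMeasurableAtFilter)
        hg_cont.continuousAt
    have h2 : HasDerivAt (fun t : ℝ => t + δ) 1 t := (hasDerivAt_id t).add_const δ
    have h3 := h1.comp t h2
    rw [mul_one] at h3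
    exact h3
  have hHc : Continuous H := by
    rw [continuous_iff_continuousAt]; exact fun t => (hH t).continuousAt
  have hH0 : H 0 = 0 := by simp [hHdef]
  set E : ℝ → ℝ := fun t => Real.exp (2 * H t) with hEdef
  have hE : ∀ t : ℝ, HasDerivAt E (2 * g (t + δ) * E t) t := by
    intro t
    have := (((hH t).const_mul 2).exp)
    simpa [hEdef, mul_comm] using this
  have hEc : Continuous E := Real.continuous_exp.comp (continuous_const.mul hHc)
  have hE0 : E 0 = 1 := by simp [hEdef, hH0]
  have hEpos : ∀ t, 0 < E t := fun t => Real.exp_pos _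
  set G : ℝ → ℝ := fun t => ∫ τ in (0:ℝ)..t, Real.exp (-2 * H τ) with hGdef
  have hGint : Continuous fun τ => Real.exp (-2 * H τ) :=
    Real.continuous_exp.comp (continuous_const.mul hHc)
  have hG : ∀ t : ℝ, HasDerivAt G (Real.exp (-2 * H t)) t := by
    intro t
    exact intervalIntegral.integral_hasDerivAt_right (hGint.intervalIntegrable _ _)
      (hGint.aestronglyMeasurable.stronglyMeasurableAtFilter) hGint.continuousAt
  have hGc : Continuous G := by
    rw [continuous_iff_continuousAt]; exact fun t => (hG t).continuousAt
  have hG0 : G 0 = 0 := by simp [hGdef]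
  have hGpos : ∀ t : ℝ, 0 < t → 0 < G t := by
    intro t ht
    exact intervalIntegral_pos_of_pos (hGint.intervalIntegrable _ _)
      (fun x => Real.exp_pos _) ht
  -- the key formula for `w`
  have hwE : ∀ t ∈ Set.Icc 0 L, w t = (E t * G t)⁻¹ := by
    intro t ht
    rw [hw t]
    congr 1
    have key : ∀ τ ∈ Set.uIcc (0:ℝ) t,
        Real.exp (2 * ∫ s in (τ + δ)..(t + δ), h s) = E t * Real.exp (-2 * H τ) := by
      intro τ hτ
      rw [Set.uIcc_of_le ht.1] at hτ
      have hτδ : τ + δ ∈ Set.Icc δ l :=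
        ⟨le_add_of_nonneg_left hτ.1, by linarith [hτ.2, ht.2]⟩
      have htδ : t + δ ∈ Set.Icc δ l := ⟨le_add_of_nonneg_left ht.1, by linarith [ht.2]⟩
      have hsub : Set.uIcc (τ + δ) (t + δ) ⊆ Set.Icc δ l := Set.uIcc_subset_Icc hτδ htδ
      have h1 : (∫ s in (τ + δ)..(t + δ), h s) = ∫ s in (τ + δ)..(t + δ), g s :=
        intervalIntegral.integral_congr (fun s hs => (hg_eq s (hsub hs)).symm)
      have h2 : (∫ s in (τ + δ)..(t + δ), g s) = H t - H τ := by
        rw [hHdef]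
        exact (intervalIntegral.integral_interval_sub_left
          (hg_cont.intervalIntegrable _ _) (hg_cont.intervalIntegrable _ _)).symm
      rw [h1, h2, hEdef, ← Real.exp_add]
      ring_nf
    rw [intervalIntegral.integral_congr key, intervalIntegral.integral_const_mul]
  have hwpos : ∀ t ∈ Set.Ioc 0 L, 0 < w t := by
    intro t ht
    rw [hwE t ⟨ht.1.le, ht.2⟩]
    exact inv_pos.mpr (mul_pos (hEpos t) (hGpos t ht.1))
  have hEGne : ∀ t ∈ Set.Ioc 0 L, E t * G t ≠ 0 := by
    intro t ht
    exact (mul_pos (hEpos t) (hGpos t ht.1)).ne'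
  -- derivative
  refine ⟨hwpos, ⟨fun t => -(w t)^2 - 2 * h (t + δ) * w t, ?_, ?_⟩, ?_⟩
  · -- continuity of w'
    have hwc : ContinuousOn w (Set.Ioc 0 L) := by
      apply ContinuousOn.congr (f := fun t => (E t * G t)⁻¹)
      · exact ((hEc.continuousOn.mul hGc.continuousOn).inv₀ hEGne)
      · intro t ht; exact hwE t ⟨ht.1.le, ht.2⟩
    have hhc : ContinuousOn (fun t => h (t + δ)) (Set.Ioc 0 L) := by
      apply hh_cont.comp (by fun_prop)
      intro t ht
      show t + δ ∈ Set.Ioc 0 l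
      have h2 : t ≤ l - δ := ht.2
      exact ⟨by linarith [ht.1], by linarith⟩
    exact ((hwc.pow 2).neg).sub ((continuousOn_const.mul hhc).mul hwc)
  · intro t ht
    have htIcc : t ∈ Set.Icc 0 L := ⟨ht.1.le, ht.2⟩
    have htδ : t + δ ∈ Set.Icc δ l := ⟨le_add_of_nonneg_left ht.1.le, by linarith [ht.2]⟩
    have hne : E t * G t ≠ 0 := hEGne t ht
    have hd : HasDerivAt (fun u => (E u * G u)⁻¹)
        (-(2 * g (t + δ) * E t * G t + E t * Real.exp (-2 * H t)) / (E t * G t) ^ 2) t := by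
      exact ((hE t).mul (hG t)).inv hne
    have hexpinv : Real.exp (-2 * H t) = (E t)⁻¹ := by
      rw [hEdef]
      rw [← Real.exp_neg]
      ring_nf
    have hghe : g (t + δ) = h (t + δ) := hg_eq _ htδ
    have hval : -(2 * g (t + δ) * E t * G t + E t * Real.exp (-2 * H t)) / (E t * G t) ^ 2
        = -(w t)^2 - 2 * h (t + δ) * w t := by
      rw [hexpinv, hghe, hwE t htIcc]
      have hE' : E t ≠ 0 := (hEpos t).ne'
      have hG' : G t ≠ 0 := (hGpos t ht.1).ne'
      field_simp
      ring
    refine ⟨?_, by ring⟩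
    show HasDerivWithinAt w (-(w t)^2 - 2 * h (t + δ) * w t) (Set.Ioc 0 L) t
    rw [← hval]
    exact HasDerivWithinAt.congr hd.hasDerivWithinAt
      (fun y hy => hwE y ⟨hy.1.le, hy.2⟩) (hwE t htIcc)
  · -- the limit
    have hElim : Tendsto (fun t => (E t)⁻¹) (nhdsWithin 0 (Set.Ioi 0)) (nhds 1) := by
      have : Tendsto E (nhdsWithin 0 (Set.Ioi 0)) (nhds 1) := by
        have := hEc.continuousAt (x := 0)
        rw [ContinuousAt, hE0] at this
        exact this.mono_left nhdsWithin_le_nhds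
      simpa using this.inv₀ one_ne_zero
    have hGlim : Tendsto (fun t => G t / t) (nhdsWithin 0 (Set.Ioi 0)) (nhds 1) := by
      have hs : Tendsto (slope G 0) (nhdsWithin 0 {(0:ℝ)}ᶜ) (nhds (Real.exp (-2 * H 0))) :=
        hasDerivAt_iff_tendsto_slope.mp (hG 0)
      have h1 : Real.exp (-2 * H 0) = 1 := by simp [hH0]
      rw [h1] at hs
      have hs' : Tendsto (slope G 0) (nhdsWithin 0 (Set.Ioi 0)) (nhds 1) :=
        hs.mono_left (nhdsWithin_mono 0 (fun x hx => ne_of_gt hx))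
      apply hs'.congr
      intro x
      simp [slope, hG0, div_eq_inv_mul]
    have hmain : Tendsto (fun t => (G t / t)⁻¹ * (E t)⁻¹) (nhdsWithin 0 (Set.Ioi 0))
        (nhds 1) := by
      have := (hGlim.inv₀ one_ne_zero).mul hElim
      simpa using this
    apply hmain.congr'
    have hmem : Set.Ioc 0 L ∈ nhdsWithin (0:ℝ) (Set.Ioi 0) :=
      Ioc_mem_nhdsGT_of_mem ⟨le_refl 0, hL0⟩
    filter_upwards [hmem, self_mem_nhdsWithin] with t ht ht0
    rw [hwE t ⟨ht.1.le, ht.2⟩]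
    have hE' : E t ≠ 0 := (hEpos t).ne'
    have hG' : G t ≠ 0 := (hGpos t ht.1).ne'
    have ht' : (t:ℝ) ≠ 0 := ne_of_gt ht.1
    field_simp
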